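/- Let n > 1 be an integer, let ζ ∈ ℂ be a primitive nth root of unity, and let s(t) be a polynomial with integer coefficients. If s(ζ) is a unit in the ring ℤ[ζ], then there exist an integer j and ε ∈ {1, −1} such that ε·ζ^j·s(ζ) = s(ζ^{−1}). -/

import Mathlib

open Polynomial

lemma aux_tot_key : ∀ N n : ℕ, 0 < n → 0 < N → n ∣ N → N.totient ≤ n.totient →
    N = n ∨ (Odd n ∧ N = 2 * n) := by
  intro N
  induction N using Nat.strong_induction_on with
  | _ N ih =>
    intro n hn hN hdvd hle
    by_cases hNn : N = n
    · exact Or.inl hNn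
    obtain ⟨k, hk⟩ := hdvd
    have hk1 : k ≠ 1 := by rintro rfl; simp at hk; exact hNn hk
    have hk0 : k ≠ 0 := by rintro rfl; simp at hk; omega
    obtain ⟨p, hp, hpk⟩ := Nat.exists_prime_and_dvd hk1
    obtain ⟨k', rfl⟩ := hpk
    have hp2 : 2 ≤ p := hp.two_le
    have hk'0 : k' ≠ 0 := by rintro rfl; simp at hk; omega
    set M := n * k' with hM
    have hNM : N = p * M := by rw [hk, hM]; ring
    have hM0 : 0 < M := by positivity
    have hnM : n ∣ M := Dvd.intro k' rfl
    have hφn : 0 < n.totient := Nat.totient_pos.mpr hn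
    have hφM : n.totient ≤ M.totient :=
      Nat.le_of_dvd (Nat.totient_pos.mpr hM0) (Nat.totient_dvd_of_dvd hnM)
    by_cases hpM : p ∣ M
    · have : N.totient = p * M.totient := by
        rw [hNM]; exact Nat.totient_mul_of_prime_of_dvd hp hpM
      nlinarith [hle, hφM, hφn]
    · have hφN : N.totient = (p - 1) * M.totient := by
        rw [hNM]; exact Nat.totient_mul_of_prime_of_not_dvd hp hpM
      have hp2' : p = 2 := by
        by_contra h
        have h3 : 3 ≤ p := by omega
        have : 2 * M.totient ≤ (p - 1) * M.totient :=
          Nat.mul_le_mul_right _ (by omega)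
        omega
      subst hp2'
      have hφNM : N.totient = M.totient := by omega
      have hMN : M < N := by omega
      rcases ih M hMN n hn hM0 hnM (by omega) with h | h
      · exact Or.inr ⟨Nat.odd_iff.mpr (by omega), by omega⟩
      · exfalso
        obtain ⟨-, h2⟩ := h
        exact hpM ⟨n, h2⟩

lemma aux_aeval_ringHom {A B : Type*} [CommRing A] [CommRing B] (f : A →+* B) (x : A)
    (s : Polynomial ℤ) : f (Polynomial.aeval x s) = Polynomial.aeval (f x) s :=
  (Polynomial.aeval_algHom_apply f.toIntAlgHom x s).symm

lemma aux_aeval_mem_subring (S : Subring ℂ) (x : ℂ) (hx : x ∈ S) (s : Polynomial ℤ) :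
    Polynomial.aeval x s ∈ S := by
  rw [Polynomial.aeval_def, Polynomial.eval₂_eq_sum_range]
  refine Subring.sum_mem _ fun i _ => Subring.mul_mem _ ?_ (Subring.pow_mem _ hx i)
  simpa using intCast_mem S (s.coeff i)

/-- (Odoni's criterion.) Let `n > 1`, `ζ ∈ ℂ` a primitive `n`th root of
unity, and `s` a polynomial with integer coefficients. If `s(ζ)` is a unit of the subring
`ℤ[ζ]` of `ℂ`, then there are an integer `j` and `ε = ±1` with `ε ζ^j s(ζ) = s(ζ⁻¹)`. -/
theorem stmt_9 (n : ℕ) (hn : 1 < n) (ζ : ℂ) (hζ : IsPrimitiveRoot ζ n) (s : Polynomial ℤ)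
    (hu : ∃ u ∈ Subring.closure ({ζ} : Set ℂ), (Polynomial.aeval ζ s) * u = 1) :
    ∃ (j : ℤ) (ε : ℂ), (ε = 1 ∨ ε = -1) ∧
      ε * ζ ^ j * Polynomial.aeval ζ s = Polynomial.aeval ζ⁻¹ s := by
  obtain ⟨v, hv_mem, hv⟩ := hu
  have hn0 : 0 < n := by omega
  have hζn : ζ ^ n = 1 := hζ.pow_eq_one
  have hζ0 : ζ ≠ 0 := hζ.ne_zero hn0.ne'
  have hζinv : ζ⁻¹ = ζ ^ (n - 1) := by
    have hmul : ζ * ζ ^ (n - 1) = 1 := by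
      have h1 : n - 1 + 1 = n := by omega
      rw [← pow_succ', h1]; exact hζn
    exact inv_eq_of_mul_eq_one_right hmul
  set u := Polynomial.aeval ζ s with hu_def
  set c := Polynomial.aeval ζ⁻¹ s with hc_def
  set α := c * v with hα_def
  -- memberships in ℤ[ζ]
  have hζ_cl : ζ ∈ Subring.closure ({ζ} : Set ℂ) := Subring.subset_closure rfl
  have hζinv_cl : ζ⁻¹ ∈ Subring.closure ({ζ} : Set ℂ) := by
    rw [hζinv]; exact Subring.pow_mem _ hζ_cl _
  have hc_cl : c ∈ Subring.closure ({ζ} : Set ℂ) := aux_aeval_mem_subring _ _ hζinv_cl s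
  have hα_cl : α ∈ Subring.closure ({ζ} : Set ℂ) := Subring.mul_mem _ hc_cl hv_mem
  -- the number field K = ℚ(ζ)
  have hζint : IsIntegral ℤ ζ := by
    refine ⟨Polynomial.X ^ n - 1, ?_, ?_⟩
    · simpa using Polynomial.monic_X_pow_sub_C (1 : ℤ) hn0.ne'
    · simp [Polynomial.eval₂_sub, hζn]
  have hζintQ : IsIntegral ℚ ζ := hζint.tower_top
  set K := IntermediateField.adjoin ℚ ({ζ} : Set ℂ) with hK_def
  have hζK : ζ ∈ K := IntermediateField.mem_adjoin_simple_self ℚ ζ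
  haveI : FiniteDimensional ℚ K := IntermediateField.adjoin.finiteDimensional hζintQ
  haveI : NumberField K := ⟨⟩
  have hcl_le : Subring.closure ({ζ} : Set ℂ) ≤ K.toSubfield.toSubring := by
    rw [Subring.closure_le]
    intro x hx
    rw [Set.mem_singleton_iff] at hx
    subst hx; exact hζK
  have hζK' : ζ ∈ K := hζK
  set ζK : K := ⟨ζ, hζK⟩ with hζK_def
  have hαK : α ∈ K := hcl_le hα_cl
  have hvK : v ∈ K := hcl_le hv_mem
  set xK : K := ⟨α, hαK⟩ with hxK_def
  set vK : K := ⟨v, hvK⟩ with hvK_def2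
  -- K-level elements
  set uK : K := Polynomial.aeval ζK s with huK_def
  set cK : K := Polynomial.aeval ζK⁻¹ s with hcK_def
  have hcoe : ∀ y : K, (y : ℂ) = algebraMap K ℂ y := fun y => rfl
  have huK_coe : (uK : ℂ) = u := by
    rw [hcoe, huK_def, aux_aeval_ringHom (algebraMap K ℂ) ζK s]; rfl
  have hcK_coe : (cK : ℂ) = c := by
    rw [hcoe, hcK_def, aux_aeval_ringHom (algebraMap K ℂ) ζK⁻¹ s, map_inv₀]; rfl
  have huv : uK * vK = 1 := by
    apply Subtype.ext
    push_cast [huK_coe]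
    exact hv
  have hxK_eq : xK = cK * vK := by
    apply Subtype.ext
    push_cast [hcK_coe]
    rfl
  -- integrality
  have hαint : IsIntegral ℤ α := by
    refine IsIntegral.of_mem_closure' ({ζ} : Set ℂ) ?_ α hα_cl
    intro x hx; rw [Set.mem_singleton_iff] at hx; subst hx; exact hζint
  have hxKint : IsIntegral ℤ xK :=
    (isIntegral_algHom_iff (algebraMap K ℂ).toIntAlgHom
      (algebraMap K ℂ).injective (x := xK)).mp (by exact hαint)
  -- all embeddings have norm one
  have hnorm : ∀ φ : K →+* ℂ, ‖φ xK‖ = 1 := by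
    intro φ
    set w : ℂ := φ ζK with hw_def
    have hwn : w ^ n = 1 := by
      rw [hw_def, ← map_pow]
      have : ζK ^ n = 1 := by apply Subtype.ext; push_cast; exact hζn
      rw [this, map_one]
    have hwnorm : ‖w‖ = 1 := Complex.norm_eq_one_of_pow_eq_one hwn hn0.ne'
    have hφu : φ uK = Polynomial.aeval w s := by
      rw [huK_def, aux_aeval_ringHom φ ζK s]
    have hφc : φ cK = Polynomial.aeval w⁻¹ s := by
      rw [hcK_def, aux_aeval_ringHom φ ζK⁻¹ s, map_inv₀]
    have hconj : Polynomial.aeval w⁻¹ s = (starRingEnd ℂ) (Polynomial.aeval w s) := by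
      rw [aux_aeval_ringHom (starRingEnd ℂ) w s, Complex.inv_eq_conj hwnorm]
    have hφuv : φ uK * φ vK = 1 := by rw [← map_mul, huv, map_one]
    have : ‖φ cK‖ = ‖φ uK‖ := by
      rw [hφc, hconj, hφu, RCLike.norm_conj]
    calc ‖φ xK‖ = ‖φ cK‖ * ‖φ vK‖ := by rw [hxK_eq, map_mul, norm_mul]
      _ = ‖φ uK‖ * ‖φ vK‖ := by rw [this]
      _ = ‖φ uK * φ vK‖ := (norm_mul _ _).symm
      _ = 1 := by rw [hφuv, norm_one]
  -- Kronecker: α is a root of unity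
  obtain ⟨m, hm0, hm⟩ := NumberField.Embeddings.pow_eq_one_of_norm_eq_one K ℂ hxKint hnorm
  have hαm : α ^ m = 1 := by
    have : ((xK ^ m : K) : ℂ) = ((1 : K) : ℂ) := by rw [hm]
    push_cast at this
    exact this
  have hαfin : IsOfFinOrder α := isOfFinOrder_iff_pow_eq_one.mpr ⟨m, hm0, hαm⟩
  set N := orderOf α with hN_def
  have hN0 : 0 < N := orderOf_pos_iff.mpr hαfin
  have hordζ : orderOf ζ = n := hζ.eq_orderOf.symm
  -- element of order lcm N n inside K
  obtain ⟨z, hz_mem, hz_ord⟩ := Commute.exists_orderOf_eq_lcm (G := ℂ) (Commute.all α ζ)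
  set L := Nat.lcm N n with hL_def
  have hzL : orderOf z = L := by rw [hz_ord, hordζ]
  have hL0 : 0 < L := Nat.pos_of_ne_zero (Nat.lcm_ne_zero hN0.ne' hn0.ne')
  have hnL : n ∣ L := Nat.dvd_lcm_right N n
  have hzprim : IsPrimitiveRoot z L := hzL ▸ IsPrimitiveRoot.orderOf z
  have hzK : z ∈ K := by
    have : Submonoid.closure ({α, ζ} : Set ℂ) ≤ K.toSubfield.toSubring.toSubmonoid := by
      rw [Submonoid.closure_le]
      rintro x (rfl | rfl)
      · exact hαK
      · exact hζK
    exact this hz_mem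
  -- totient bound
  have hφLn : L.totient ≤ n.totient := by
    have h1 : minpoly ℚ z = Polynomial.cyclotomic L ℚ :=
      (Polynomial.cyclotomic_eq_minpoly_rat hzprim hL0).symm
    have h2 : minpoly ℚ (⟨z, hzK⟩ : K) = minpoly ℚ z := by
      have h := minpoly.algHom_eq K.val (algebraMap K ℂ).injective (⟨z, hzK⟩ : K)
      exact h.symm
    have h3 : (minpoly ℚ (⟨z, hzK⟩ : K)).natDegree ≤ Module.finrank ℚ K :=
      minpoly.natDegree_le _
    have h4 : Module.finrank ℚ K = n.totient := by
      rw [hK_def, IntermediateField.adjoin.finrank hζintQ,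
        ← Polynomial.cyclotomic_eq_minpoly_rat hζ hn0, Polynomial.natDegree_cyclotomic]
    rw [h2, h1, Polynomial.natDegree_cyclotomic] at h3
    omega
  -- conclude α = ± ζ^j
  have hαL : α ^ L = 1 := by
    have : N ∣ L := Nat.dvd_lcm_left N n
    obtain ⟨t, ht⟩ := this
    rw [ht, pow_mul, pow_orderOf_eq_one, one_pow]
  have key : ∃ (i : ℕ) (ε : ℂ), (ε = 1 ∨ ε = -1) ∧ ε * ζ ^ i = α := by
    rcases aux_tot_key L n hn0 hL0 hnL hφLn with hLn | ⟨hodd, hL2n⟩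
    · haveI : NeZero n := ⟨hn0.ne'⟩
      obtain ⟨i, -, hi⟩ := hζ.eq_pow_of_pow_eq_one (hLn ▸ hαL)
      exact ⟨i, 1, Or.inl rfl, by rw [one_mul, hi]⟩
    · -- n odd, L = 2n : use -ζ primitive 2n-th root
      have hord_neg : orderOf (-ζ : ℂ) = 2 * n := by
        have h1 : orderOf (-1 : ℂ) = 2 := by
          rw [orderOf_neg_one]
          simp [ringChar.eq_zero]
        have hcop : Nat.Coprime (orderOf (-1 : ℂ)) (orderOf ζ) := by
          rw [h1, hordζ]
          exact Nat.coprime_two_left.mpr hodd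
        have := (Commute.all (-1 : ℂ) ζ).orderOf_mul_eq_mul_orderOf_of_coprime hcop
        rw [h1, hordζ] at this
        simpa using this
      have hnegprim : IsPrimitiveRoot (-ζ) (2 * n) := hord_neg ▸ IsPrimitiveRoot.orderOf (-ζ)
      haveI : NeZero (2 * n) := ⟨by omega⟩
      obtain ⟨i, -, hi⟩ := hnegprim.eq_pow_of_pow_eq_one (hL2n ▸ hαL)
      refine ⟨i, (-1) ^ i, ?_, ?_⟩
      · rcases Nat.even_or_odd i with h | h
        · exact Or.inl h.neg_one_pow
        · exact Or.inr h.neg_one_pow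
      · rw [← hi, neg_pow]; ring
  obtain ⟨i, ε, hε, hεα⟩ := key
  refine ⟨(i : ℤ), ε, hε, ?_⟩
  rw [zpow_natCast, hεα, hα_def]
  calc c * v * u = c * (u * v) := by ring
    _ = c := by rw [hv, mul_one]
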